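/- One-sided Wald-type inequality: let X₁, X₂, ... be random variables with bounded range, g > 0, and T = min{t : X₁+...+X_t ≥ g}. If E(T) < ∞ and E(X_t | T ≥ t) ≤ C for all t ∈ ℕ (with C > 0), then E(T) ≥ g/C. -/

import Mathlib

open MeasureTheory

/-- One-sided Wald-type inequality: if `X₁, X₂, ...` have bounded range,
`T = min{t : X₁+...+X_t ≥ g}` with `g > 0`, `E(T) < ∞`, and `E(X_t·1_{T≥t}) ≤ C·P(T ≥ t)`
for all `t` (i.e. `E(X_t | T ≥ t) ≤ C`), then `E(T) ≥ g/C`. -/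
theorem stmt18 {Ω : Type*} [MeasurableSpace Ω] (P : Measure Ω) [IsProbabilityMeasure P]
    (X : ℕ → Ω → ℝ) (hXmeas : ∀ t, Measurable (X t))
    (M : ℝ) (hbdd : ∀ t ω, |X t ω| ≤ M)
    (g C : ℝ) (hg : 0 < g) (hC : 0 < C)
    (T : Ω → ℕ)
    (hT : ∀ ω, T ω = sInf {t : ℕ | g ≤ ∑ i ∈ Finset.Icc 1 t, X i ω})
    (hTfin : ∀ ω, ∃ t : ℕ, g ≤ ∑ i ∈ Finset.Icc 1 t, X i ω)
    (hTint : Integrable (fun ω => (T ω : ℝ)) P)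
    (hcond : ∀ t : ℕ, 1 ≤ t →
      ∫ ω in {ω | t ≤ T ω}, X t ω ∂P ≤ C * (P {ω | t ≤ T ω}).toReal) :
    g / C ≤ ∫ ω, (T ω : ℝ) ∂P := by
  classical
  have hΩ : Nonempty Ω := by
    by_contra h
    have h1 : (Set.univ : Set Ω) = ∅ := by
      simp [Set.univ_eq_empty_iff, not_nonempty_iff.mp h]
    have := measure_univ (μ := P)
    rw [h1] at this
    simp at this
  obtain ⟨ω₀⟩ := hΩ
  have hM : 0 ≤ M := le_trans (abs_nonneg _) (hbdd 0 ω₀)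
  set A : ℕ → Set Ω := fun t => {ω | t ≤ T ω} with hA
  have hmemT : ∀ ω, g ≤ ∑ i ∈ Finset.Icc 1 (T ω), X i ω := by
    intro ω
    have hne : {t : ℕ | g ≤ ∑ i ∈ Finset.Icc 1 t, X i ω}.Nonempty := hTfin ω
    have := Nat.sInf_mem hne
    rw [hT ω]; exact this
  have hAset : ∀ t, A t = ⋂ s ∈ Finset.range t, {ω | ∑ i ∈ Finset.Icc 1 s, X i ω < g} := by
    intro t
    ext ω
    simp only [Set.mem_iInter, hA, Set.mem_setOf_eq, Finset.mem_range]
    constructor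
    · intro h s hs
      by_contra hle
      push_neg at hle
      have : T ω ≤ s := by rw [hT]; exact Nat.sInf_le hle
      omega
    · intro h
      by_contra hlt
      push_neg at hlt
      exact absurd (hmemT ω) (not_le.mpr (h (T ω) hlt))
  have hAmeas : ∀ t, MeasurableSet (A t) := by
    intro t
    rw [hAset t]
    exact MeasurableSet.biInter (Set.to_countable _) fun s _ =>
      measurableSet_lt (Finset.measurable_sum _ fun i _ => hXmeas i) measurable_const
  -- the summand functions
  set f : ℕ → Ω → ℝ := fun t => (A (t + 1)).indicator (X (t + 1)) with hf
  have hfmeas : ∀ t, Measurable (f t) := fun t => (hXmeas (t + 1)).indicator (hAmeas (t + 1))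
  -- pointwise identity: ∑' t, f t ω = partial sum up to T ω
  have hfsum : ∀ ω, ∑' t, f t ω = ∑ i ∈ Finset.Icc 1 (T ω), X i ω := by
    intro ω
    have h1 : ∑' t, f t ω = ∑ t ∈ Finset.range (T ω), f t ω := by
      refine tsum_eq_sum ?_
      intro t ht
      simp only [Finset.mem_range, not_lt] at ht
      simp only [hf, Set.indicator_apply, hA, Set.mem_setOf_eq]
      rw [if_neg (by omega)]
    rw [h1, ← Finset.Ico_add_one_right_eq_Icc, Finset.sum_Ico_eq_sum_range]
    refine Finset.sum_congr (by rw [Nat.add_sub_cancel]) ?_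
    intro t ht
    simp only [Finset.mem_range] at ht
    simp only [hf, Set.indicator_apply, hA, Set.mem_setOf_eq]
    rw [if_pos (by omega), Nat.add_comm 1 t]
  -- pointwise identity for T in ℝ≥0∞
  have hTsum : ∀ ω, ∑' t : ℕ, (A (t + 1)).indicator (fun _ => (1 : ENNReal)) ω = (T ω : ENNReal) := by
    intro ω
    have h1 : ∑' t : ℕ, (A (t + 1)).indicator (fun _ => (1 : ENNReal)) ω
        = ∑ t ∈ Finset.range (T ω), (A (t + 1)).indicator (fun _ => (1 : ENNReal)) ω := by
      refine tsum_eq_sum ?_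
      intro t ht
      simp only [Finset.mem_range, not_lt] at ht
      simp only [Set.indicator_apply, hA, Set.mem_setOf_eq]
      rw [if_neg (by omega)]
    have h2 : ∀ t ∈ Finset.range (T ω),
        (A (t + 1)).indicator (fun _ => (1 : ENNReal)) ω = 1 := by
      intro t ht
      simp only [Finset.mem_range] at ht
      simp only [Set.indicator_apply, hA, Set.mem_setOf_eq]
      rw [if_pos (by omega)]
    rw [h1, Finset.sum_congr rfl h2]
    simp
  -- ∑' t, P (A (t+1)) = ∫⁻ T < ∞
  have hlinT : ∫⁻ ω, (T ω : ENNReal) ∂P < ⊤ := by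
    have h : ∫⁻ ω, (‖(T ω : ℝ)‖₊ : ENNReal) ∂P < ⊤ := hTint.hasFiniteIntegral
    convert h using 2 with ω
    simp
  have hsumP : ∑' t : ℕ, P (A (t + 1)) = ∫⁻ ω, (T ω : ENNReal) ∂P := by
    have h1 : ∀ t : ℕ, P (A (t + 1)) =
        ∫⁻ ω, (A (t + 1)).indicator (fun _ => (1 : ENNReal)) ω ∂P := by
      intro t
      rw [lintegral_indicator (hAmeas (t + 1))]
      simp
    calc ∑' t : ℕ, P (A (t + 1))
        = ∑' t : ℕ, ∫⁻ ω, (A (t + 1)).indicator (fun _ => (1 : ENNReal)) ω ∂P := by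
          exact tsum_congr h1
      _ = ∫⁻ ω, ∑' t : ℕ, (A (t + 1)).indicator (fun _ => (1 : ENNReal)) ω ∂P := by
          rw [lintegral_tsum]
          intro t
          exact ((measurable_const.indicator (hAmeas (t + 1)))).aemeasurable
      _ = ∫⁻ ω, (T ω : ENNReal) ∂P := by
          exact lintegral_congr hTsum
  have hsumPne : ∑' t : ℕ, P (A (t + 1)) ≠ ⊤ := by rw [hsumP]; exact hlinT.ne
  -- bound on lintegral of ‖f t‖
  have hlf : ∀ t : ℕ, ∫⁻ ω, (‖f t ω‖₊ : ENNReal) ∂P ≤ ENNReal.ofReal M * P (A (t + 1)) := by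
    intro t
    have h1 : ∀ ω, (‖f t ω‖₊ : ENNReal) ≤ (A (t + 1)).indicator (fun _ => ENNReal.ofReal M) ω := by
      intro ω
      simp only [hf, Set.indicator_apply]
      split_ifs with h
      · rw [← enorm_eq_nnnorm, ← ofReal_norm]
        exact ENNReal.ofReal_le_ofReal (by simpa [Real.norm_eq_abs] using hbdd (t + 1) ω)
      · simp
    calc ∫⁻ ω, (‖f t ω‖₊ : ENNReal) ∂P
        ≤ ∫⁻ ω, (A (t + 1)).indicator (fun _ => ENNReal.ofReal M) ω ∂P := lintegral_mono h1
      _ = ENNReal.ofReal M * P (A (t + 1)) := by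
          rw [lintegral_indicator (hAmeas (t + 1))]; simp [mul_comm]
  have hfin : ∑' t : ℕ, ∫⁻ ω, (‖f t ω‖₊ : ENNReal) ∂P ≠ ⊤ := by
    refine ne_top_of_le_ne_top ?_ (ENNReal.tsum_le_tsum hlf)
    rw [ENNReal.tsum_mul_left]
    exact ENNReal.mul_ne_top ENNReal.ofReal_ne_top hsumPne
  -- T is measurable, and the stopped sum S
  have hTmeas : Measurable T := by
    refine measurable_to_countable' ?_
    intro n
    have : T ⁻¹' {n} = A n \ A (n + 1) := by
      ext ω
      simp only [Set.mem_preimage, Set.mem_singleton_iff, Set.mem_diff, hA, Set.mem_setOf_eq]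
      omega
    rw [this]
    exact (hAmeas n).diff (hAmeas (n + 1))
  set S : Ω → ℝ := fun ω => ∑ i ∈ Finset.Icc 1 (T ω), X i ω with hS
  have hSmeas : Measurable S := by
    have hG : Measurable fun p : Ω × ℕ => ∑ i ∈ Finset.Icc 1 p.2, X i p.1 := by
      refine measurable_from_prod_countable_left fun n => ?_
      exact Finset.measurable_sum (Finset.Icc 1 n) fun i _ => hXmeas i
    exact hG.comp (measurable_id.prodMk hTmeas)
  have hSint : Integrable S P := by
    refine Integrable.mono' (hTint.const_mul M) hSmeas.aestronglyMeasurable ?_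
    refine Filter.Eventually.of_forall fun ω => ?_
    simp only [hS, Real.norm_eq_abs]
    calc |∑ i ∈ Finset.Icc 1 (T ω), X i ω| ≤ ∑ i ∈ Finset.Icc 1 (T ω), |X i ω| :=
          Finset.abs_sum_le_sum_abs _ _
      _ ≤ ∑ i ∈ Finset.Icc 1 (T ω), M := Finset.sum_le_sum fun i _ => hbdd i ω
      _ = M * (T ω : ℝ) := by
          rw [Finset.sum_const, Nat.card_Icc]
          simp [mul_comm]
  -- step 1 : g ≤ ∫ S
  have step1 : g ≤ ∫ ω, S ω ∂P := by
    have : g = ∫ _ω, g ∂P := by simp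
    rw [this]
    exact integral_mono (integrable_const g) hSint hmemT
  -- step 2 : ∫ S = ∑' t, ∫ f t
  have step2 : ∫ ω, S ω ∂P = ∑' t, ∫ ω, f t ω ∂P := by
    rw [← integral_tsum (fun t => (hfmeas t).aestronglyMeasurable) hfin]
    exact integral_congr_ae (Filter.Eventually.of_forall fun ω => (hfsum ω).symm)
  -- step 3 : each ∫ f t ≤ C * P(A (t+1)).toReal
  have step3 : ∀ t : ℕ, ∫ ω, f t ω ∂P ≤ C * (P (A (t + 1))).toReal := by
    intro t
    rw [hf]
    rw [integral_indicator (hAmeas (t + 1))]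
    exact hcond (t + 1) (by omega)
  -- summability facts
  have hsummP : Summable fun t : ℕ => (P (A (t + 1))).toReal := by
    refine ENNReal.summable_toReal hsumPne
  have hsummf : Summable fun t : ℕ => ∫ ω, f t ω ∂P := by
    refine Summable.of_norm_bounded (g := fun t => M * (P (A (t + 1))).toReal) (hsummP.mul_left M) ?_
    intro t
    rw [hf, integral_indicator (hAmeas (t + 1))]
    refine norm_setIntegral_le_of_norm_le_const (measure_lt_top P _) ?_
    · intro ω _
      rw [Real.norm_eq_abs]; exact hbdd (t + 1) ω
  -- step 4 : sum of the bounds equals C * ∫ T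
  have hTreal : ∑' t : ℕ, (P (A (t + 1))).toReal = ∫ ω, (T ω : ℝ) ∂P := by
    have h1 : ∫ ω, (T ω : ℝ) ∂P = (∫⁻ ω, (T ω : ENNReal) ∂P).toReal := by
      rw [integral_eq_lintegral_of_nonneg_ae (Filter.Eventually.of_forall fun ω => by positivity)
        hTint.aestronglyMeasurable]
      congr 1
      refine lintegral_congr fun ω => ?_
      simp
    rw [h1, ← hsumP, ENNReal.tsum_toReal_eq fun t => measure_ne_top P _]
  have main : g ≤ C * ∫ ω, (T ω : ℝ) ∂P := by
    calc g ≤ ∫ ω, S ω ∂P := step1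
      _ = ∑' t, ∫ ω, f t ω ∂P := step2
      _ ≤ ∑' t : ℕ, C * (P (A (t + 1))).toReal := Summable.tsum_le_tsum step3 hsummf (hsummP.mul_left C)
      _ = C * ∑' t : ℕ, (P (A (t + 1))).toReal := by rw [tsum_mul_left]
      _ = C * ∫ ω, (T ω : ℝ) ∂P := by rw [hTreal]
  rw [div_le_iff₀ hC] at *
  linarith [main]
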